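/- For any pair (u,v) over a field F with u monic of degree n, deg v < n, and u, v coprime, the n×n Hankel matrix H_n(u,v) (with entries from the Laurent expansion of v/u at infinity) is nonsingular. -/

import Mathlib

open Polynomial

private lemma reflect_finset_sum {R : Type*} [CommSemiring R] {ι : Type*} (s : Finset ι)
    (f : ι → R[X]) (N : ℕ) :
    Polynomial.reflect N (∑ i ∈ s, f i) = ∑ i ∈ s, Polynomial.reflect N (f i) := by
  classical
  induction s using Finset.induction_on with
  | empty => simp [Polynomial.reflect_zero]
  | insert _ _ h ih => rw [Finset.sum_insert h, Finset.sum_insert h, Polynomial.reflect_add, ih]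

private lemma revAt_of_gt {N i : ℕ} (h : N < i) : Polynomial.revAt N i = i := by
  exact if_neg (by omega)

private lemma reflect_natDegree_le {R : Type*} [Semiring R] (f : R[X]) (N : ℕ)
    (h : f.natDegree ≤ N) : (Polynomial.reflect N f).natDegree ≤ N := by
  rw [Polynomial.natDegree_le_iff_coeff_eq_zero]
  intro m hm
  rw [Polynomial.coeff_reflect, revAt_of_gt hm]
  exact Polynomial.coeff_eq_zero_of_natDegree_lt (lt_of_le_of_lt h hm)

private lemma reflect_shift {R : Type*} [Semiring R] (f : R[X]) (m k : ℕ)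
    (h : f.natDegree ≤ m) :
    Polynomial.reflect (m + k) f = X ^ k * Polynomial.reflect m f := by
  ext i
  rw [Polynomial.coeff_reflect, Polynomial.coeff_X_pow_mul']
  by_cases hik : k ≤ i
  · rw [if_pos hik, Polynomial.coeff_reflect]
    by_cases him : i ≤ m + k
    · rw [Polynomial.revAt_le him, Polynomial.revAt_le (by omega : i - k ≤ m)]
      congr 1
      omega
    · rw [revAt_of_gt (by omega), revAt_of_gt (by omega)]
      rw [Polynomial.coeff_eq_zero_of_natDegree_lt (by omega),
        Polynomial.coeff_eq_zero_of_natDegree_lt (by omega)]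
  · rw [if_neg hik, Polynomial.revAt_le (by omega : i ≤ m + k)]
    exact Polynomial.coeff_eq_zero_of_natDegree_lt (by omega)

private lemma coe_reflect {F : Type*} [Field F] (n : ℕ) (p : F[X]) (hp : p.natDegree ≤ n) :
    (((Polynomial.reflect n p : F[X]) : PowerSeries F) : LaurentSeries F)
      = ((PowerSeries.X : PowerSeries F) : LaurentSeries F) ^ n
        * Polynomial.aeval (((PowerSeries.X : PowerSeries F) : LaurentSeries F))⁻¹ p := by
  set t : LaurentSeries F := ((PowerSeries.X : PowerSeries F) : LaurentSeries F) with htdef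
  have ht : t ≠ 0 := by
    rw [htdef, PowerSeries.coe_X]
    exact HahnSeries.single_ne_zero one_ne_zero
  conv_rhs => rw [Polynomial.as_sum_range' p (n + 1) (Nat.lt_succ_of_le hp)]
  conv_lhs => rw [Polynomial.as_sum_range' p (n + 1) (Nat.lt_succ_of_le hp)]
  rw [reflect_finset_sum, map_sum]
  have hcoe : ∀ g : F[X], ((g : PowerSeries F) : LaurentSeries F)
      = ((HahnSeries.ofPowerSeries ℤ F).comp Polynomial.coeToPowerSeries.ringHom) g :=
    fun g => rfl
  rw [hcoe, map_sum, Finset.mul_sum]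
  refine Finset.sum_congr rfl fun i hi => ?_
  rw [Finset.mem_range] at hi
  have hin : i ≤ n := Nat.lt_succ_iff.mp hi
  rw [← Polynomial.C_mul_X_pow_eq_monomial, Polynomial.reflect_C_mul_X_pow,
    Polynomial.revAt_le hin]
  have hterm : ((HahnSeries.ofPowerSeries ℤ F).comp Polynomial.coeToPowerSeries.ringHom)
      (C (p.coeff i) * X ^ (n - i))
      = ((PowerSeries.C (p.coeff i) : PowerSeries F) : LaurentSeries F) * t ^ (n - i) := by
    rw [map_mul, map_pow]
    simp only [RingHom.comp_apply, Polynomial.coeToPowerSeries.ringHom_apply, Polynomial.coe_C, Polynomial.coe_X]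
    rfl
  rw [hterm, map_mul, Polynomial.aeval_C, map_pow, Polynomial.aeval_X]
  have halg : (algebraMap F (LaurentSeries F)) (p.coeff i)
      = ((PowerSeries.C (p.coeff i) : PowerSeries F) : LaurentSeries F) := rfl
  rw [halg, pow_sub₀ t ht hin, inv_pow]
  ring

/-- For a Hermite pair `(u, v)` (`u` monic of degree `n`, `deg v < n`, `u, v` coprime),
the `n × n` Hankel matrix `H_n(u,v)`, whose `(i,j)` entry is `a_{i+j-1}` (1-based; here
`a k` stands for `a_{k+1}`) where `v(X)/u(X) = ∑_{i≥1} a_i X^{-i}` is the Laurent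
expansion at infinity (below written with `t = X⁻¹` in `F((t))`), is nonsingular. -/
theorem hankel_of_hermite_pair_nonsingular (F : Type*) [Field F] (n : ℕ) (hn : 1 ≤ n)
    (u v : F[X]) (hu : u.Monic) (hun : u.natDegree = n) (hv : v.degree < n)
    (hcop : IsCoprime u v) (a : ℕ → F)
    (ha : Polynomial.aeval (((PowerSeries.X : PowerSeries F) : LaurentSeries F)⁻¹) v
        = Polynomial.aeval (((PowerSeries.X : PowerSeries F) : LaurentSeries F)⁻¹) u
            * ((PowerSeries.X * PowerSeries.mk a : PowerSeries F) : LaurentSeries F)) :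
    IsUnit (Matrix.of fun i j : Fin n => a ((i : ℕ) + (j : ℕ))).det := by
  classical
  rw [isUnit_iff_ne_zero]
  intro hdet
  obtain ⟨c, hc0, hHc⟩ := (Matrix.exists_mulVec_eq_zero_iff).mpr hdet
  set t : LaurentSeries F := ((PowerSeries.X : PowerSeries F) : LaurentSeries F) with htdef
  set A : PowerSeries F := PowerSeries.X * PowerSeries.mk a with hA
  -- the candidate kernel polynomial
  set q : F[X] := ∑ j : Fin n, C (c j) * X ^ (j : ℕ) with hq
  have hqdeg : q.natDegree ≤ n - 1 := by
    refine Polynomial.natDegree_sum_le_of_forall_le _ _ fun j _ => ?_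
    exact (Polynomial.natDegree_C_mul_X_pow_le _ _).trans (by have := j.2; omega)
  have hqcoeff : ∀ j : Fin n, q.coeff (j : ℕ) = c j := by
    intro j
    rw [hq, Polynomial.finset_sum_coeff, Finset.sum_eq_single j]
    · simp
    · intro b _ hbj
      rw [Polynomial.coeff_C_mul, Polynomial.coeff_X_pow,
        if_neg (fun h => hbj (Fin.ext h.symm)), mul_zero]
    · intro h
      exact absurd (Finset.mem_univ j) h
  have hq0 : q ≠ 0 := by
    intro h
    apply hc0
    funext j
    have := hqcoeff j
    rw [h, Polynomial.coeff_zero] at this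
    exact this.symm
  -- degree bookkeeping
  have hvn : v.natDegree ≤ n - 1 := by
    by_cases hv0 : v = 0
    · simp [hv0]
    · have := (Polynomial.natDegree_lt_iff_degree_lt hv0).mpr hv
      omega
  have hvn' : v.natDegree ≤ n := hvn.trans (by omega)
  -- division with remainder
  set p : F[X] := (v * q) /ₘ u with hp
  set r : F[X] := (v * q) %ₘ u with hr
  have hdiv : v * q = r + u * p := (Polynomial.modByMonic_add_div (v * q) u).symm
  have hrdeg : r.natDegree ≤ n - 1 := by
    by_cases hr0 : r = 0
    · simp [hr0]
    · have := Polynomial.natDegree_lt_natDegree hr0 (Polynomial.degree_modByMonic_lt (v * q) hu)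
      omega
  have hpdeg : p.natDegree ≤ n - 1 := by
    rw [hp, Polynomial.natDegree_divByMonic _ hu]
    have := Polynomial.natDegree_mul_le (p := v) (q := q)
    omega
  -- reflected polynomials
  set ut : F[X] := Polynomial.reflect n u with hut
  set vt : F[X] := Polynomial.reflect n v with hvt
  set qt : F[X] := Polynomial.reflect (n - 1) q with hqt
  set pt : F[X] := Polynomial.reflect (n - 1) p with hpt
  set rt : F[X] := Polynomial.reflect (n - 1) r with hrt
  have hrefl : vt * qt = X ^ n * rt + ut * pt := by
    have h1 : Polynomial.reflect (n + (n - 1)) (v * q) = vt * qt :=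
      Polynomial.reflect_mul v q hvn' hqdeg
    have h2 : Polynomial.reflect (n + (n - 1)) (u * p) = ut * pt :=
      Polynomial.reflect_mul u p (le_of_eq hun) hpdeg
    have h3 : Polynomial.reflect (n + (n - 1)) r = X ^ n * rt := by
      rw [show n + (n - 1) = (n - 1) + n by omega]
      exact reflect_shift r (n - 1) n hrdeg
    rw [← h1, hdiv, Polynomial.reflect_add, h2, h3]
  -- the power series identity E
  have hE : (vt : PowerSeries F) = (ut : PowerSeries F) * A := by
    apply HahnSeries.ofPowerSeries_injective (Γ := ℤ) (R := F)
    have l1 := coe_reflect n u (le_of_eq hun)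
    have l2 := coe_reflect n v hvn'
    calc (HahnSeries.ofPowerSeries ℤ F) (vt : PowerSeries F)
        = ((vt : PowerSeries F) : LaurentSeries F) := rfl
      _ = t ^ n * Polynomial.aeval t⁻¹ v := l2
      _ = t ^ n * (Polynomial.aeval t⁻¹ u * ((A : PowerSeries F) : LaurentSeries F)) := by
          rw [ha]
      _ = (t ^ n * Polynomial.aeval t⁻¹ u) * ((A : PowerSeries F) : LaurentSeries F) := by ring
      _ = ((ut : PowerSeries F) : LaurentSeries F) * ((A : PowerSeries F) : LaurentSeries F) := by
          rw [l1]
      _ = (HahnSeries.ofPowerSeries ℤ F) ((ut : PowerSeries F) * A) := by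
          rw [map_mul, hA, map_mul, map_mul]
  -- main power series equation
  set W : PowerSeries F := A * (qt : PowerSeries F) with hW
  have hPS : (ut : PowerSeries F) * W
      = (PowerSeries.X : PowerSeries F) ^ n * (rt : PowerSeries F)
        + (ut : PowerSeries F) * (pt : PowerSeries F) := by
    have := congrArg (fun g : F[X] => (g : PowerSeries F)) hrefl
    simp only [Polynomial.coe_mul, Polynomial.coe_add, Polynomial.coe_pow, Polynomial.coe_X]
      at this
    rw [hW, ← mul_assoc, ← hE, this]
  -- ut is a unit in the power series ring
  have hu_unit : IsUnit (ut : PowerSeries F) := by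
    rw [PowerSeries.isUnit_iff_constantCoeff]
    have h0 : PowerSeries.constantCoeff (ut : PowerSeries F) = ut.coeff 0 := by
      rw [← PowerSeries.coeff_zero_eq_constantCoeff_apply, Polynomial.coeff_coe]
    have h1 : ut.coeff 0 = 1 := by
      rw [hut, Polynomial.coeff_reflect, Polynomial.revAt_le (Nat.zero_le n), Nat.sub_zero,
        ← hun]
      exact hu.coeff_natDegree
    rw [h0, h1]
    exact isUnit_one
  -- the coefficients of W in the window [n, 2n) vanish (Hankel condition)
  have hqt_sum : qt = ∑ j : Fin n, C (c j) * X ^ (n - 1 - (j : ℕ)) := by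
    rw [hqt, hq, reflect_finset_sum]
    refine Finset.sum_congr rfl fun j _ => ?_
    rw [Polynomial.reflect_C_mul_X_pow, Polynomial.revAt_le (by have := j.2; omega : (j : ℕ) ≤ n - 1)]
  have hqt_PS : (qt : PowerSeries F)
      = ∑ j : Fin n, PowerSeries.C (c j) * (PowerSeries.X : PowerSeries F) ^ (n - 1 - (j : ℕ)) := by
    rw [hqt_sum]
    have := map_sum (Polynomial.coeToPowerSeries.ringHom (R := F))
      (fun j : Fin n => C (c j) * X ^ (n - 1 - (j : ℕ))) Finset.univ
    simpa only [Polynomial.coeToPowerSeries.ringHom_apply, map_mul, map_pow,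
      Polynomial.coe_C, Polynomial.coe_X] using this
  have hWhigh : ∀ i : ℕ, i < n → PowerSeries.coeff (n + i) W = 0 := by
    intro i hi
    have hterm : ∀ j : Fin n,
        PowerSeries.coeff (n + i)
          (A * (PowerSeries.C (c j) * (PowerSeries.X : PowerSeries F) ^ (n - 1 - (j : ℕ))))
        = a (i + (j : ℕ)) * c j := by
      intro j
      have hj := j.2
      have e1 : A * (PowerSeries.C (c j) * (PowerSeries.X : PowerSeries F) ^ (n - 1 - (j : ℕ)))
          = (PowerSeries.C (c j) * A) * (PowerSeries.X : PowerSeries F) ^ (n - 1 - (j : ℕ)) := by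
        ring
      have e2 : n + i = (i + (j : ℕ) + 1) + (n - 1 - (j : ℕ)) := by omega
      rw [e1, e2, PowerSeries.coeff_mul_X_pow, PowerSeries.coeff_C_mul, hA,
        PowerSeries.coeff_succ_X_mul, PowerSeries.coeff_mk]
      ring
    have hfin : PowerSeries.coeff (n + i) W = ∑ j : Fin n, a (i + (j : ℕ)) * c j := by
      rw [hW, hqt_PS, Finset.mul_sum, map_sum]
      exact Finset.sum_congr rfl fun j _ => hterm j
    have hrow := congrFun hHc ⟨i, hi⟩
    simp only [Matrix.mulVec, dotProduct, Matrix.of_apply, Pi.zero_apply] at hrow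
    rw [hfin]
    exact hrow
  -- pt has no coefficients ≥ n
  have hptdeg : pt.natDegree ≤ n - 1 := reflect_natDegree_le p (n - 1) hpdeg
  have hrtdeg : rt.natDegree ≤ n - 1 := reflect_natDegree_le r (n - 1) hrdeg
  -- divisibility
  obtain ⟨U, hU⟩ := hu_unit
  have hmul : (ut : PowerSeries F) * (W - (pt : PowerSeries F))
      = (PowerSeries.X : PowerSeries F) ^ n * (rt : PowerSeries F) := by
    rw [mul_sub, hPS]; ring
  have hDd : (PowerSeries.X : PowerSeries F) ^ n ∣ (W - (pt : PowerSeries F)) := by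
    refine ⟨(↑U⁻¹ : PowerSeries F) * (rt : PowerSeries F), ?_⟩
    have : (↑U : PowerSeries F) * (W - (pt : PowerSeries F))
        = (PowerSeries.X : PowerSeries F) ^ n * (rt : PowerSeries F) := by rw [hU]; exact hmul
    calc W - (pt : PowerSeries F)
        = (↑U⁻¹ : PowerSeries F) * ((↑U : PowerSeries F) * (W - (pt : PowerSeries F))) := by
          rw [← mul_assoc, Units.inv_mul, one_mul]
      _ = (PowerSeries.X : PowerSeries F) ^ n * ((↑U⁻¹ : PowerSeries F) * (rt : PowerSeries F)) := by
          rw [this]; ring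
  -- all coefficients of D = W - pt below 2n vanish
  have hD2n : (PowerSeries.X : PowerSeries F) ^ (2 * n) ∣ (W - (pt : PowerSeries F)) := by
    rw [PowerSeries.X_pow_dvd_iff]
    intro m hm
    by_cases hmn : m < n
    · exact PowerSeries.X_pow_dvd_iff.mp hDd m hmn
    · rw [map_sub]
      have h1 : PowerSeries.coeff m W = 0 := by
        have : m = n + (m - n) := by omega
        rw [this]
        exact hWhigh (m - n) (by omega)
      have h2 : PowerSeries.coeff m (pt : PowerSeries F) = 0 := by
        rw [Polynomial.coeff_coe]
        exact Polynomial.coeff_eq_zero_of_natDegree_lt (by omega)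
      rw [h1, h2, sub_zero]
  -- conclude rt = 0
  obtain ⟨D', hD'⟩ := hD2n
  have hXn : (PowerSeries.X : PowerSeries F) ^ n ≠ 0 := pow_ne_zero n PowerSeries.X_ne_zero
  have hrt_eq : (rt : PowerSeries F)
      = (PowerSeries.X : PowerSeries F) ^ n * ((ut : PowerSeries F) * D') := by
    apply mul_left_cancel₀ hXn
    rw [← hmul, hD']
    rw [show (2 * n) = n + n by omega, pow_add]
    ring
  have hrt0 : rt = 0 := by
    ext m
    rw [Polynomial.coeff_zero]
    by_cases hmn : m < n
    · have := PowerSeries.X_pow_dvd_iff.mp ⟨(ut : PowerSeries F) * D', hrt_eq⟩ m hmn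
      rwa [Polynomial.coeff_coe] at this
    · exact Polynomial.coeff_eq_zero_of_natDegree_lt (by omega)
  have hr0 : r = 0 := by
    ext m
    rw [Polynomial.coeff_zero]
    have : r.coeff m = rt.coeff (Polynomial.revAt (n - 1) m) := by
      rw [hrt, Polynomial.coeff_reflect, Polynomial.revAt_invol]
    rw [this, hrt0, Polynomial.coeff_zero]
  -- coprimality and degree contradiction
  have hdvd : u ∣ v * q := ⟨p, by rw [hdiv, hr0, zero_add]⟩
  have hdq : u ∣ q := hcop.dvd_of_dvd_mul_left hdvd
  have : q = 0 := Polynomial.eq_zero_of_dvd_of_natDegree_lt hdq (by omega)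
  exact hq0 this
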